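/- Define κ₀(z) = −4i·e^{−3z/2}·sin(√3z/2)·(cosh(3z/2) − cos(√3z/2)) for z ∈ ℂ. Then for every n ∈ ℕ: κ₀(2πn/√3) = 0 and κ₀'(2πn/√3) = (−1)^{n+1}·i√3·(1 − (−1)ⁿ e^{−√3πn})². -/

import Mathlib

open Complex

/-- `κ₀(z) = −4i e^{−3z/2} sin(√3z/2)(cosh(3z/2) − cos(√3z/2))`. -/
noncomputable def kappa0 (z : ℂ) : ℂ :=
  -4 * Complex.I * Complex.exp (-(3 * z) / 2) * Complex.sin ((Real.sqrt 3 : ℂ) * z / 2) *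
    (Complex.cosh (3 * z / 2) - Complex.cos ((Real.sqrt 3 : ℂ) * z / 2))

/-- For every `n ∈ ℕ`: `κ₀(2πn/√3) = 0` and
`κ₀'(2πn/√3) = (−1)^{n+1} i√3 (1 − (−1)ⁿ e^{−√3πn})²`. -/
theorem kappa0_value_and_deriv (n : ℕ) :
    kappa0 ((2 * Real.pi * n / Real.sqrt 3 : ℝ) : ℂ) = 0 ∧
    deriv kappa0 ((2 * Real.pi * n / Real.sqrt 3 : ℝ) : ℂ)
      = (-1) ^ (n + 1) * Complex.I * (Real.sqrt 3 : ℂ) *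
        (1 - (-1) ^ n * Complex.exp (-((Real.sqrt 3 * Real.pi * n : ℝ) : ℂ))) ^ 2 := by
  have h3 : (0:ℝ) < Real.sqrt 3 := Real.sqrt_pos.mpr (by norm_num)
  have hs0 : ((Real.sqrt 3 : ℝ) : ℂ) ≠ 0 := Complex.ofReal_ne_zero.mpr h3.ne'
  have hsq : ((Real.sqrt 3 : ℝ) : ℂ) * ((Real.sqrt 3 : ℝ) : ℂ) = 3 := by
    rw [← Complex.ofReal_mul, Real.mul_self_sqrt (by norm_num)]; norm_num
  set a : ℂ := ((Real.sqrt 3 : ℝ) : ℂ) with ha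
  set z₀ : ℂ := ((2 * Real.pi * n / Real.sqrt 3 : ℝ) : ℂ) with hz
  have hA : a * z₀ / 2 = ((n * Real.pi : ℝ) : ℂ) := by
    rw [ha, hz]; push_cast; field_simp
  have hB : 3 * z₀ / 2 = ((Real.sqrt 3 * Real.pi * n : ℝ) : ℂ) := by
    rw [hz]; push_cast; field_simp
    linear_combination (-(n:ℂ)) * hsq
  have hB' : -(3 * z₀) / 2 = -((Real.sqrt 3 * Real.pi * n : ℝ) : ℂ) := by
    rw [← hB]; ring
  have hsin : Complex.sin (a * z₀ / 2) = 0 := by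
    rw [hA, ← Complex.ofReal_sin, Real.sin_nat_mul_pi]; norm_num
  have hcosr : Real.cos (n * Real.pi) = (-1) ^ n := by
    simpa using Real.cos_nat_mul_pi_sub 0 n
  have hcos : Complex.cos (a * z₀ / 2) = (-1) ^ n := by
    rw [hA, ← Complex.ofReal_cos, hcosr]; push_cast; ring
  set E : ℂ := Complex.exp (-((Real.sqrt 3 * Real.pi * n : ℝ) : ℂ)) with hE
  set P : ℂ := Complex.exp (((Real.sqrt 3 * Real.pi * n : ℝ) : ℂ)) with hP
  have hPE : P * E = 1 := by
    rw [hP, hE, ← Complex.exp_add]; simp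
  have h1n : ((-1:ℂ)) ^ n * ((-1:ℂ)) ^ n = 1 := by
    rw [← pow_add, ← two_mul, pow_mul]; norm_num
  -- derivatives of the pieces
  have hlin1 : HasDerivAt (fun z : ℂ => -(3 * z) / 2) (-3 / 2) z₀ := by
    simpa using (((hasDerivAt_id z₀).const_mul (3:ℂ)).neg.div_const 2)
  have hlin2 : HasDerivAt (fun z : ℂ => a * z / 2) (a / 2) z₀ := by
    simpa using (((hasDerivAt_id z₀).const_mul a).div_const 2)
  have hlin3 : HasDerivAt (fun z : ℂ => 3 * z / 2) (3 / 2) z₀ := by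
    simpa using (((hasDerivAt_id z₀).const_mul (3:ℂ)).div_const 2)
  have hexp := hlin1.cexp
  have hsin' := hlin2.csin
  have hcosh' := hlin3.ccosh
  have hcos' := hlin2.ccos
  have H := (((hexp.const_mul (-4 * Complex.I)).mul hsin').mul (hcosh'.sub hcos'))
  have Hk : HasDerivAt kappa0 (deriv kappa0 z₀) z₀ := by
    have : HasDerivAt kappa0
        ((-4 * Complex.I * (Complex.exp (-(3 * z₀) / 2) * (-3 / 2)) *
            Complex.sin (a * z₀ / 2) +
          -4 * Complex.I * Complex.exp (-(3 * z₀) / 2) *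
            (Complex.cos (a * z₀ / 2) * (a / 2))) *
          (Complex.cosh (3 * z₀ / 2) - Complex.cos (a * z₀ / 2)) +
        -4 * Complex.I * Complex.exp (-(3 * z₀) / 2) * Complex.sin (a * z₀ / 2) *
          (Complex.sinh (3 * z₀ / 2) * (3 / 2) - -Complex.sin (a * z₀ / 2) * (a / 2))) z₀ := H
    exact this.deriv ▸ this
  -- compute the derivative value
  have hD : deriv kappa0 z₀ =
      ((-4 * Complex.I * (Complex.exp (-(3 * z₀) / 2) * (-3 / 2)) *
            Complex.sin (a * z₀ / 2) +
          -4 * Complex.I * Complex.exp (-(3 * z₀) / 2) *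
            (Complex.cos (a * z₀ / 2) * (a / 2))) *
          (Complex.cosh (3 * z₀ / 2) - Complex.cos (a * z₀ / 2)) +
        -4 * Complex.I * Complex.exp (-(3 * z₀) / 2) * Complex.sin (a * z₀ / 2) *
          (Complex.sinh (3 * z₀ / 2) * (3 / 2) - -Complex.sin (a * z₀ / 2) * (a / 2))) := by
    exact HasDerivAt.deriv H
  constructor
  · unfold kappa0
    rw [← ha, ← hz] at *
    rw [hsin]; ring
  · have hC : Complex.cosh (((Real.sqrt 3 * Real.pi * n : ℝ) : ℂ)) = (P + E) / 2 := by
      rw [hP, hE]; linear_combination (Complex.two_cosh _) / 2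
    rw [hD, hsin, hcos, hB', hB, ← hE, hC, pow_succ]
    linear_combination (-Complex.I * ((-1:ℂ))^n * a) * hPE +
      (Complex.I * a * E^2 * ((-1:ℂ))^n) * h1n
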